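/- For any real constants a, φ, x₀, the function u(x,t) = √2 · a · e^{a(x + a²t - x₀)} · e^{iφ} / (1 + e^{2a(x + a²t - x₀)}) satisfies the Sasa–Satsuma equation u_t - u_{xxx} - 6|u|²u_x - 3u(|u|²)_x = 0 for all (x,t) ∈ ℝ². -/

import Mathlib

open Complex Matrix ComplexConjugate

noncomputable section

def ux (u : ℝ → ℝ → ℂ) (x t : ℝ) : ℂ := deriv (fun x' => u x' t) x
def ut (u : ℝ → ℝ → ℂ) (x t : ℝ) : ℂ := deriv (fun t' => u x t') t

def soliton (a φ x₀ : ℝ) : ℝ → ℝ → ℂ := fun x t =>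
  (Real.sqrt 2 * a : ℝ) * Complex.exp ((a * (x + a ^ 2 * t - x₀) : ℝ) : ℂ) *
      Complex.exp (Complex.I * (φ : ℂ)) /
    (1 + Complex.exp ((2 * a * (x + a ^ 2 * t - x₀) : ℝ) : ℂ))

def EE (a x₀ : ℝ) : ℝ → ℝ → ℂ := fun x t => Complex.exp ((a * (x + a ^ 2 * t - x₀) : ℝ) : ℂ)

def CC (a φ : ℝ) : ℂ := ((Real.sqrt 2 * a : ℝ) : ℂ) * Complex.exp (Complex.I * (φ : ℂ))

lemma EE_hx (a x₀ x t : ℝ) :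
    HasDerivAt (fun x' => EE a x₀ x' t) ((a : ℂ) * EE a x₀ x t) x := by
  have h : HasDerivAt (fun x' : ℝ => ((a * (x' + a ^ 2 * t - x₀) : ℝ) : ℂ)) (a : ℂ) x := by
    have : HasDerivAt (fun x' : ℝ => a * (x' + a ^ 2 * t - x₀)) a x := by
      simpa using (((hasDerivAt_id x).add_const (a^2*t)).sub_const x₀).const_mul a
    simpa using this.ofReal_comp
  simpa [EE, mul_comm] using h.cexp

lemma EE_ht (a x₀ x t : ℝ) :
    HasDerivAt (fun t' => EE a x₀ x t') ((a : ℂ) ^ 3 * EE a x₀ x t) t := by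
  have h : HasDerivAt (fun t' : ℝ => ((a * (x + a ^ 2 * t' - x₀) : ℝ) : ℂ)) ((a:ℂ)^3) t := by
    have h0 : HasDerivAt (fun t' : ℝ => a * (x + a ^ 2 * t' - x₀)) (a^3) t := by
      have := ((((hasDerivAt_id t).const_mul (a^2)).const_add x).sub_const x₀).const_mul a
      refine this.congr_deriv ?_; ring
    simpa using h0.ofReal_comp
  simpa [EE, mul_comm] using h.cexp

lemma EE_eq (a x₀ x t : ℝ) : EE a x₀ x t = ((Real.exp (a * (x + a ^ 2 * t - x₀)) : ℝ) : ℂ) := by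
  simp [EE, Complex.ofReal_exp]

lemma hne (a x₀ x t : ℝ) : (1 : ℂ) + (EE a x₀ x t) ^ 2 ≠ 0 := by
  rw [EE_eq]
  have h1 : ((1 : ℝ) + (Real.exp (a * (x + a ^ 2 * t - x₀))) ^ 2 : ℝ) ≠ 0 := by positivity
  intro h
  apply h1
  exact_mod_cast (by push_cast; exact_mod_cast h : ((1 + Real.exp (a * (x + a ^ 2 * t - x₀)) ^ 2 : ℝ) : ℂ) = 0)

lemma conj_EE (a x₀ x t : ℝ) : conj (EE a x₀ x t) = EE a x₀ x t := by
  rw [EE_eq, Complex.conj_ofReal]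

lemma soliton_eq (a φ x₀ : ℝ) :
    soliton a φ x₀ = fun x t => CC a φ * EE a x₀ x t / (1 + (EE a x₀ x t) ^ 2) := by
  funext x t
  have h2 : Complex.exp ((2 * a * (x + a ^ 2 * t - x₀) : ℝ) : ℂ) = (EE a x₀ x t) ^ 2 := by
    rw [EE, ← Complex.exp_nat_mul]
    norm_num
    ring_nf
  rw [soliton, h2, CC, EE]
  ring

lemma CC_mul_conj (a φ : ℝ) : CC a φ * conj (CC a φ) = ((2 : ℂ) * a ^ 2) := by
  have hc : conj (Complex.exp (Complex.I * (φ:ℂ))) = Complex.exp (-(Complex.I * φ)) := by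
    rw [← Complex.exp_conj]; simp [Complex.conj_ofReal]
  rw [CC, _root_.map_mul, hc, Complex.conj_ofReal,
    show ((Real.sqrt 2 * a : ℝ) : ℂ) * Complex.exp (Complex.I * φ) *
      (((Real.sqrt 2 * a : ℝ) : ℂ) * Complex.exp (-(Complex.I * φ)))
      = ((Real.sqrt 2 * a : ℝ) : ℂ)^2 * Complex.exp (Complex.I * φ + -(Complex.I * φ)) by
    rw [Complex.exp_add]; ring]
  simp
  rw [show ((Real.sqrt 2 :ℂ) * a)^2 = ((Real.sqrt 2 :ℂ)^2) * a^2 by ring]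
  norm_cast
  rw [Real.sq_sqrt (by norm_num)]


/-- Stage-k complex profiles. -/
def H0 (a φ : ℝ) : ℂ → ℂ := fun w => CC a φ * Complex.exp w / (1 + Complex.exp w ^ 2)
def H1 (a φ : ℝ) : ℂ → ℂ := fun w =>
  CC a φ * (Complex.exp w - Complex.exp w ^ 3) / (1 + Complex.exp w ^ 2) ^ 2
def H2 (a φ : ℝ) : ℂ → ℂ := fun w =>
  CC a φ * (Complex.exp w - 6 * Complex.exp w ^ 3 + Complex.exp w ^ 5) /
    (1 + Complex.exp w ^ 2) ^ 3
def H3 (a φ : ℝ) : ℂ → ℂ := fun w =>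
  CC a φ * (Complex.exp w - 23 * Complex.exp w ^ 3 + 23 * Complex.exp w ^ 5
    - Complex.exp w ^ 7) / (1 + Complex.exp w ^ 2) ^ 4

lemma hne' (s : ℝ) : (1 : ℂ) + Complex.exp (s : ℂ) ^ 2 ≠ 0 := by
  rw [← Complex.ofReal_exp]
  have h1 : ((1 : ℝ) + (Real.exp s) ^ 2 : ℝ) ≠ 0 := by positivity
  intro h
  apply h1
  exact_mod_cast (by exact_mod_cast h : ((1 + Real.exp s ^ 2 : ℝ) : ℂ) = 0)

lemma hH0 (a φ : ℝ) (s : ℝ) : HasDerivAt (H0 a φ) (H1 a φ s) (s : ℂ) := by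
  have he := Complex.hasDerivAt_exp (s : ℂ)
  have h := (he.const_mul (CC a φ)).div ((he.pow 2).const_add 1) (hne' s)
  refine h.congr_deriv (Eq.symm ?_)
  simp only [Pi.pow_apply, Pi.sub_apply, Pi.add_apply]
  rw [H1, div_eq_div_iff (pow_ne_zero 2 (hne' s)) (pow_ne_zero 2 (hne' s))]
  push_cast
  ring

lemma hH1 (a φ : ℝ) (s : ℝ) : HasDerivAt (H1 a φ) (H2 a φ s) (s : ℂ) := by
  have he := Complex.hasDerivAt_exp (s : ℂ)
  have h := ((he.sub (he.pow 3)).const_mul (CC a φ)).div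
    (((he.pow 2).const_add 1).pow 2) (pow_ne_zero 2 (hne' s))
  refine h.congr_deriv (Eq.symm ?_)
  simp only [Pi.pow_apply, Pi.sub_apply, Pi.add_apply]
  rw [H2, div_eq_div_iff (pow_ne_zero 3 (hne' s)) (pow_ne_zero 2 (pow_ne_zero 2 (hne' s)))]
  push_cast
  ring

lemma hH2 (a φ : ℝ) (s : ℝ) : HasDerivAt (H2 a φ) (H3 a φ s) (s : ℂ) := by
  have he := Complex.hasDerivAt_exp (s : ℂ)
  have h := (((he.sub ((he.pow 3).const_mul 6)).add (he.pow 5)).const_mul (CC a φ)).div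
    (((he.pow 2).const_add 1).pow 3) (pow_ne_zero 3 (hne' s))
  refine h.congr_deriv (Eq.symm ?_)
  simp only [Pi.pow_apply, Pi.sub_apply, Pi.add_apply]
  rw [H3, div_eq_div_iff (pow_ne_zero 4 (hne' s)) (pow_ne_zero 2 (pow_ne_zero 3 (hne' s)))]
  push_cast
  ring

/-- Chain rule through the affine real map. -/
lemma comp_affine {F : ℂ → ℂ} {d : ℂ} (c k x : ℝ)
    (hF : HasDerivAt F d ((c * (x + k) : ℝ) : ℂ)) :
    HasDerivAt (fun x' : ℝ => F ((c * (x' + k) : ℝ) : ℂ)) ((c : ℂ) * d) x := by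
  have h1 : HasDerivAt (fun y : ℝ => F (y : ℂ)) d (c * (x + k)) := hF.comp_ofReal
  have h2 : HasDerivAt (fun x' : ℝ => c * (x' + k)) c x := by
    simpa using ((hasDerivAt_id x).add_const k).const_mul c
  have := h1.scomp x h2
  simpa only [Function.comp_def, Complex.real_smul] using this

lemma sol_as_H0 (a φ x₀ : ℝ) :
    soliton a φ x₀ = fun x t => H0 a φ ((a * (x + a ^ 2 * t - x₀) : ℝ) : ℂ) := by
  rw [soliton_eq]; funext x t; rw [H0, EE]

def U1 (a φ x₀ : ℝ) : ℝ → ℝ → ℂ := fun x t =>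
  (a : ℂ) * H1 a φ ((a * (x + a ^ 2 * t - x₀) : ℝ) : ℂ)
def U2 (a φ x₀ : ℝ) : ℝ → ℝ → ℂ := fun x t =>
  (a : ℂ) ^ 2 * H2 a φ ((a * (x + a ^ 2 * t - x₀) : ℝ) : ℂ)
def U3 (a φ x₀ : ℝ) : ℝ → ℝ → ℂ := fun x t =>
  (a : ℂ) ^ 3 * H3 a φ ((a * (x + a ^ 2 * t - x₀) : ℝ) : ℂ)

lemma arg_x (a x₀ x t : ℝ) : a * (x + a ^ 2 * t - x₀) = a * (x + (a ^ 2 * t - x₀)) := by ring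

lemma ux_soliton (a φ x₀ : ℝ) : ux (soliton a φ x₀) = U1 a φ x₀ := by
  funext x t
  rw [ux, sol_as_H0, U1]
  simp only [arg_x a x₀ _ t]
  exact (comp_affine a (a ^ 2 * t - x₀) x (hH0 a φ _)).deriv

lemma ux_U1 (a φ x₀ : ℝ) : ux (U1 a φ x₀) = U2 a φ x₀ := by
  funext x t
  rw [ux, U2]
  simp only [U1, arg_x a x₀ _ t]
  have := ((comp_affine a (a ^ 2 * t - x₀) x (hH1 a φ _)).const_mul ((a : ℂ))).deriv
  rw [this]; ring

lemma ux_U2 (a φ x₀ : ℝ) : ux (U2 a φ x₀) = U3 a φ x₀ := by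
  funext x t
  rw [ux, U3]
  simp only [U2, arg_x a x₀ _ t]
  have := ((comp_affine a (a ^ 2 * t - x₀) x (hH2 a φ _)).const_mul ((a : ℂ) ^ 2)).deriv
  rw [this]; ring

lemma arg_t (a x₀ x t : ℝ) : a * (x + a ^ 2 * t - x₀) = a ^ 3 * (t + (x - x₀) / a ^ 2) ∨ a = 0 := by
  rcases eq_or_ne a 0 with h | h
  · exact Or.inr h
  · left; field_simp; ring

lemma ut_soliton (a φ x₀ x t : ℝ) :
    ut (soliton a φ x₀) x t = (a : ℂ) ^ 2 * U1 a φ x₀ x t := by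
  rcases eq_or_ne a 0 with h | h
  · subst h
    simp [ut, sol_as_H0, U1]
  · rw [ut, sol_as_H0, U1]
    have harg : ∀ t' : ℝ, a * (x + a ^ 2 * t' - x₀) = a ^ 3 * (t' + (x - x₀) / a ^ 2) := by
      intro t'; field_simp; ring
    simp only [harg]
    have := (comp_affine (a ^ 3) ((x - x₀) / a ^ 2) t (hH0 a φ _)).deriv
    rw [this]; push_cast; ring

theorem soliton_solves_sasa_satsuma (a φ x₀ : ℝ) :
    ∀ x t : ℝ,
      ut (soliton a φ x₀) x t - ux (ux (ux (soliton a φ x₀))) x t -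
        6 * (Complex.normSq (soliton a φ x₀ x t) : ℂ) * ux (soliton a φ x₀) x t -
        3 * soliton a φ x₀ x t *
          (soliton a φ x₀ x t * conj (ux (soliton a φ x₀) x t) +
            ux (soliton a φ x₀) x t * conj (soliton a φ x₀ x t)) = 0 := by
  intro x t
  have hCD := CC_mul_conj a φ
  have hD := hne' (a * (x + a ^ 2 * t - x₀))
  rw [ux_soliton, ux_U1, ux_U2, ut_soliton]
  rw [show ((Complex.normSq (soliton a φ x₀ x t) : ℂ)) =
      soliton a φ x₀ x t * conj (soliton a φ x₀ x t) from (Complex.mul_conj _).symm]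
  rw [sol_as_H0]
  simp only [U1, U2, U3, H0, H1, H2, H3]
  simp only [map_div₀, _root_.map_mul, map_sub, map_add, map_pow, _root_.map_one, map_ofNat,
    ← Complex.exp_conj, Complex.conj_ofReal]
  set C := CC a φ with hC
  set D := conj (CC a φ) with hDD
  set E := Complex.exp ((a * (x + a ^ 2 * t - x₀) : ℝ) : ℂ) with hEe
  field_simp
  have hZ : (1 + E ^ 2) * ((1 + E ^ 2) * (1 + E ^ 2) ^ 2 * ((1 + E ^ 2) ^ 2 * (1 + E ^ 2))) ≠ 0 := by
    exact mul_ne_zero hD (mul_ne_zero (mul_ne_zero hD (pow_ne_zero 2 hD))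
      (mul_ne_zero (pow_ne_zero 2 hD) hD))
  linear_combination (-12 * (a:ℂ) * C * (E^3 - E^5)) * hCD
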